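/- Let X, L be independent nonnegative random variables with tail functions satisfying P[X ≥ y] ≤ C·exp(-y²/3) for y ≥ 1 and the density M of L satisfying M(x) ≤ C·exp(-c·x^{1/(1-β)}) for x ≥ 1, with 0 < β < 1. Then there is K₂ > 0 such that P[√L·X ≥ y] ≤ exp(-K₂·y^{2/(2-β)}·(1+o(1))) as y → ∞. -/

import Mathlib

set_option maxHeartbeats 1000000

open MeasureTheory ProbabilityTheory Real Filter

lemma aux_exp_int_le {b T : ℝ} (hb : 0 < b) (hT : 0 ≤ T) :
    ∫ x in Set.Ioi T, Real.exp (-b * x) ≤ b⁻¹ := by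
  have h : (∫ x in Set.Ioi T, Real.exp (-b * x)) = b⁻¹ * Real.exp (-(b * T)) := by
    have := MeasureTheory.integral_comp_mul_left_Ioi (fun u => Real.exp (-u)) T hb
    simpa [neg_mul, smul_eq_mul, integral_exp_neg_Ioi, integral_exp_Iic] using this
  rw [h]
  have h1 : Real.exp (-(b * T)) ≤ 1 := Real.exp_le_one_iff.mpr (by nlinarith)
  calc b⁻¹ * Real.exp (-(b * T)) ≤ b⁻¹ * 1 := by
        exact mul_le_mul_of_nonneg_left h1 (by positivity)
    _ = b⁻¹ := mul_one _

/-- Large deviations upper bound for `√L · X`: if `P[X ≥ y] ≤ C exp(-y²/3)` for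
`y ≥ 1` and the density `M` of `L` satisfies `M x ≤ C exp(-c x^{1/(1-β)})` for
`x ≥ 1`, then `P[√L · X ≥ y] ≤ exp(-K₂ y^{2/(2-β)} (1+o(1)))` as `y → ∞`. -/
theorem ggBm_large_deviations_upper {Ω : Type*} [MeasurableSpace Ω]
    (μ : Measure Ω) [IsProbabilityMeasure μ]
    (X L : Ω → ℝ) (hXm : Measurable X) (hLm : Measurable L)
    (hX0 : ∀ ω, 0 ≤ X ω) (hL0 : ∀ᵐ ω ∂μ, 0 < L ω)
    (hindep : IndepFun X L μ)
    (β : ℝ) (hβ0 : 0 < β) (hβ1 : β < 1)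
    (C c : ℝ) (hC : 0 < C) (hc : 0 < c)
    (hXtail : ∀ y : ℝ, 1 ≤ y →
      (μ {ω | y ≤ X ω}).toReal ≤ C * Real.exp (-(y ^ 2) / 3))
    (M : ℝ → ℝ) (hM0 : ∀ x ≤ (0 : ℝ), M x = 0) (hMnn : ∀ x, 0 ≤ M x)
    (hMd : μ.map L = volume.withDensity (fun x => ENNReal.ofReal (M x)))
    (hMtail : ∀ x : ℝ, 1 ≤ x → M x ≤ C * Real.exp (-c * x ^ (1 / (1 - β)))) :
    ∃ K₂ > (0 : ℝ), ∃ g : ℝ → ℝ, Tendsto g atTop (nhds 0) ∧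
      ∀ᶠ y : ℝ in atTop,
        (μ {ω | y ≤ Real.sqrt (L ω) * X ω}).toReal ≤
          Real.exp (-K₂ * y ^ (2 / (2 - β)) * (1 + g y)) := by
  have h2β : (0:ℝ) < 2 - β := by linarith
  have h1β : (0:ℝ) < 1 - β := by linarith
  set p : ℝ := 1 / (1 - β) with hp
  have hp1 : 1 ≤ p := by
    rw [hp, le_div_iff₀ h1β]; linarith
  set α : ℝ := 2 / (2 - β) with hα
  set t : ℝ := 2 * (1 - β) / (2 - β) with ht
  have hα0 : 0 < α := by positivity
  have ht0 : 0 < t := by positivity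
  set m : ℝ := min (1/3 : ℝ) (c/2) with hm
  have hm0 : 0 < m := lt_min (by norm_num) (by positivity)
  refine ⟨m/2, by positivity, fun _ => 0, tendsto_const_nhds, ?_⟩
  have hev2 : ∀ᶠ y : ℝ in atTop, C + 2*C/c ≤ Real.exp ((m/2) * y ^ α) := by
    have h1 : Tendsto (fun y : ℝ => (m/2) * y ^ α) atTop atTop :=
      (tendsto_rpow_atTop hα0).const_mul_atTop (by positivity)
    exact (Real.tendsto_exp_atTop.comp h1).eventually_ge_atTop _
  filter_upwards [eventually_ge_atTop (1:ℝ), hev2] with y hy1 hy2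
  have hy0 : (0:ℝ) < y := lt_of_lt_of_le one_pos hy1
  set T : ℝ := y ^ t with hT
  have hT1 : 1 ≤ T := Real.one_le_rpow hy1 ht0.le
  have hT0 : 0 < T := lt_of_lt_of_le one_pos hT1
  -- exponent identities
  have hTp : T ^ p = y ^ α := by
    rw [hT, ← Real.rpow_mul hy0.le]
    congr 1
    rw [ht, hp, hα]
    field_simp
  have hsq : Real.sqrt T = y ^ (t/2) := by
    rw [hT, Real.sqrt_eq_rpow, ← Real.rpow_mul hy0.le]
    congr 1
    ring
  have hsq0 : 0 < Real.sqrt T := Real.sqrt_pos.mpr hT0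
  set q : ℝ := 1 / (2 - β) with hq
  have hyT : y / Real.sqrt T = y ^ q := by
    have hq' : y ^ q = y ^ (1 - t/2) := by
      congr 1
      rw [hq, ht]
      field_simp
      ring
    rw [hsq, hq', Real.rpow_sub hy0, Real.rpow_one]
  have hq1 : 1 ≤ y ^ q := Real.one_le_rpow hy1 (by positivity)
  have hq2 : (y ^ q) ^ 2 = y ^ α := by
    rw [sq, ← Real.rpow_add hy0]
    congr 1
    rw [hq, hα]
    ring
  -- union bound inclusion
  have hsub : {ω | y ≤ Real.sqrt (L ω) * X ω} ⊆
      {ω | T < L ω} ∪ {ω | y / Real.sqrt T ≤ X ω} := by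
    intro ω hω
    by_cases h : T < L ω
    · exact Or.inl h
    · right
      have hLle : L ω ≤ T := not_lt.mp h
      have h1 : Real.sqrt (L ω) ≤ Real.sqrt T := Real.sqrt_le_sqrt hLle
      have h2 : y ≤ Real.sqrt T * X ω :=
        le_trans hω (mul_le_mul_of_nonneg_right h1 (hX0 ω))
      exact (div_le_iff₀ hsq0).mpr (by linarith [mul_comm (Real.sqrt T) (X ω)])
  -- bound on the X part
  have hmB : (μ {ω | y / Real.sqrt T ≤ X ω}).toReal ≤ C * Real.exp (-(y ^ α)/3) := by
    have h1 := hXtail (y / Real.sqrt T) (by rw [hyT]; exact hq1)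
    rw [hyT, hq2] at h1
    rw [hyT]
    exact h1
  -- bound on the L part
  have hmA : (μ {ω | T < L ω}).toReal ≤ (2*C/c) * Real.exp (-(c/2) * y ^ α) := by
    have hmap : μ {ω | T < L ω} = ∫⁻ x in Set.Ioi T, ENNReal.ofReal (M x) := by
      have hset : {ω | T < L ω} = L ⁻¹' Set.Ioi T := rfl
      rw [hset, ← Measure.map_apply hLm measurableSet_Ioi, hMd,
        withDensity_apply _ measurableSet_Ioi]
    set D : ℝ := C * Real.exp (-(c/2) * y ^ α) with hD
    have hD0 : 0 < D := by positivity
    have hpt : ∀ x ∈ Set.Ioi T, M x ≤ D * Real.exp (-(c/2) * x) := by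
      intro x hx
      have hxT : T < x := hx
      have hx1 : (1:ℝ) ≤ x := le_trans hT1 hxT.le
      have h1 := hMtail x hx1
      have h2 : T ^ p ≤ x ^ p :=
        Real.rpow_le_rpow hT0.le hxT.le (by positivity)
      have h3 : x ≤ x ^ p := by
        calc x = x ^ (1:ℝ) := (Real.rpow_one x).symm
          _ ≤ x ^ p := Real.rpow_le_rpow_of_exponent_le hx1 hp1
      have h4 : (c/2) * y ^ α + (c/2) * x ≤ c * x ^ (1/(1-β)) := by
        rw [← hp, ← hTp]
        nlinarith
      calc M x ≤ C * Real.exp (-c * x ^ (1/(1-β))) := h1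
        _ ≤ D * Real.exp (-(c/2) * x) := by
            rw [hD, mul_assoc, ← Real.exp_add]
            refine mul_le_mul_of_nonneg_left (Real.exp_le_exp.mpr ?_) hC.le
            nlinarith
    have hgm : Measurable fun x : ℝ => D * Real.exp (-(c/2) * x) :=
      (measurable_const.mul ((measurable_const.mul measurable_id').exp))
    have hint : IntegrableOn (fun x : ℝ => D * Real.exp (-(c/2) * x)) (Set.Ioi T) := by
      exact (exp_neg_integrableOn_Ioi T (by positivity : (0:ℝ) < c/2)).const_mul D
    have hle1 : (∫⁻ x in Set.Ioi T, ENNReal.ofReal (M x)) ≤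
        ∫⁻ x in Set.Ioi T, ENNReal.ofReal (D * Real.exp (-(c/2) * x)) :=
      setLIntegral_mono (by fun_prop) (fun x hx => ENNReal.ofReal_le_ofReal (hpt x hx))
    have hle2 : (∫⁻ x in Set.Ioi T, ENNReal.ofReal (D * Real.exp (-(c/2) * x))) =
        ENNReal.ofReal (∫ x in Set.Ioi T, D * Real.exp (-(c/2) * x)) := by
      rw [← ofReal_integral_eq_lintegral_ofReal hint]
      exact Filter.Eventually.of_forall fun x => by positivity
    have hval : (∫ x in Set.Ioi T, D * Real.exp (-(c/2) * x)) ≤ D * (2/c) := by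
      rw [MeasureTheory.integral_const_mul]
      have := aux_exp_int_le (by positivity : (0:ℝ) < c/2) hT0.le
      have h2c : ((c:ℝ)/2)⁻¹ = 2/c := by field_simp
      calc D * ∫ x in Set.Ioi T, Real.exp (-(c/2) * x) ≤ D * (c/2)⁻¹ :=
            mul_le_mul_of_nonneg_left this hD0.le
        _ = D * (2/c) := by rw [h2c]
    have : μ {ω | T < L ω} ≤ ENNReal.ofReal (D * (2/c)) := by
      rw [hmap]
      exact le_trans hle1 (by rw [hle2]; exact ENNReal.ofReal_le_ofReal hval)
    have h5 := ENNReal.toReal_le_of_le_ofReal (by positivity) this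
    calc (μ {ω | T < L ω}).toReal ≤ D * (2/c) := h5
      _ = (2*C/c) * Real.exp (-(c/2) * y ^ α) := by rw [hD]; ring
  -- combine
  have hcomb : (μ {ω | y ≤ Real.sqrt (L ω) * X ω}).toReal ≤
      (μ {ω | T < L ω}).toReal + (μ {ω | y / Real.sqrt T ≤ X ω}).toReal := by
    have h1 : μ {ω | y ≤ Real.sqrt (L ω) * X ω} ≤
        μ {ω | T < L ω} + μ {ω | y / Real.sqrt T ≤ X ω} :=
      le_trans (measure_mono hsub) (measure_union_le _ _)
    have h2 := ENNReal.toReal_mono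
      (ENNReal.add_ne_top.mpr ⟨measure_ne_top _ _, measure_ne_top _ _⟩) h1
    rwa [ENNReal.toReal_add (measure_ne_top _ _) (measure_ne_top _ _)] at h2
  have hyα0 : 0 ≤ y ^ α := Real.rpow_nonneg hy0.le α
  have hfin : (2*C/c) * Real.exp (-(c/2) * y ^ α) + C * Real.exp (-(y ^ α)/3) ≤
      Real.exp (-(m/2) * y ^ α) := by
    have hA : Real.exp (-(c/2) * y ^ α) ≤ Real.exp (-m * y ^ α) := by
      apply Real.exp_le_exp.mpr
      have : m ≤ c/2 := min_le_right _ _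
      nlinarith
    have hB : Real.exp (-(y ^ α)/3) ≤ Real.exp (-m * y ^ α) := by
      apply Real.exp_le_exp.mpr
      have : m ≤ 1/3 := min_le_left _ _
      nlinarith
    have hsum : (2*C/c) * Real.exp (-(c/2) * y ^ α) + C * Real.exp (-(y ^ α)/3) ≤
        (C + 2*C/c) * Real.exp (-m * y ^ α) := by
      have e1 : (2*C/c) * Real.exp (-(c/2) * y ^ α) ≤ (2*C/c) * Real.exp (-m * y ^ α) :=
        mul_le_mul_of_nonneg_left hA (by positivity)
      have e2 : C * Real.exp (-(y ^ α)/3) ≤ C * Real.exp (-m * y ^ α) :=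
        mul_le_mul_of_nonneg_left hB hC.le
      nlinarith [Real.exp_pos (-m * y ^ α)]
    calc (2*C/c) * Real.exp (-(c/2) * y ^ α) + C * Real.exp (-(y ^ α)/3)
        ≤ (C + 2*C/c) * Real.exp (-m * y ^ α) := hsum
      _ ≤ Real.exp ((m/2) * y ^ α) * Real.exp (-m * y ^ α) :=
          mul_le_mul_of_nonneg_right hy2 (Real.exp_pos _).le
      _ = Real.exp (-(m/2) * y ^ α) := by rw [← Real.exp_add]; ring_nf
  have hgoal : (μ {ω | y ≤ Real.sqrt (L ω) * X ω}).toReal ≤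
      Real.exp (-(m/2) * y ^ α) := le_trans hcomb (by linarith)
  calc (μ {ω | y ≤ Real.sqrt (L ω) * X ω}).toReal ≤ Real.exp (-(m/2) * y ^ α) := hgoal
    _ = Real.exp (-(m/2) * y ^ (2/(2-β)) * (1 + 0)) := by rw [hα]; ring_nf
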